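/- Let X be a nonempty set, K a positive integer, C_k : X → ℂ, and D_k : X → ℝ with D_k(x) > 0 for all x. Then sup_{x ∈ X} Σ_{k=1}^K |C_k(x)|² / D_k(x) = sup_{x ∈ X, β ∈ ℂ^K} Σ_{k=1}^K ( 2·Re(conj(β_k)·C_k(x)) − |β_k|²·D_k(x) ), where both suprema are taken in the extended real numbers. -/

import Mathlib

open scoped BigOperators

lemma quad_le (C : ℂ) (D : ℝ) (hD : 0 < D) (β : ℂ) :
    2 * ((starRingEnd ℂ) β * C).re - ‖β‖ ^ 2 * D ≤ ‖C‖ ^ 2 / D := by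
  rw [le_div_iff₀ hD]
  simp only [Complex.sq_norm, Complex.normSq_apply, Complex.mul_re, Complex.conj_re,
    Complex.conj_im]
  nlinarith [sq_nonneg (C.re - β.re * D), sq_nonneg (C.im - β.im * D)]

lemma quad_eq (C : ℂ) (D : ℝ) (hD : 0 < D) :
    2 * ((starRingEnd ℂ) (C * (D⁻¹ : ℝ)) * C).re
      - ‖C * (D⁻¹ : ℝ)‖ ^ 2 * D = ‖C‖ ^ 2 / D := by
  simp only [Complex.sq_norm, Complex.normSq_apply, Complex.mul_re, Complex.mul_im,
    Complex.conj_re, Complex.conj_im, Complex.ofReal_re, Complex.ofReal_im]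
  field_simp
  ring

/-- Quadratic transform: the supremum of the multiple-ratio objective equals the supremum
of its quadratic transform over the auxiliary variables `β ∈ ℂ^K`. -/
theorem quadratic_transform
    (X : Type*) [Nonempty X] (K : ℕ) (hK : 0 < K)
    (C : Fin K → X → ℂ) (D : Fin K → X → ℝ) (hD : ∀ k x, 0 < D k x) :
    (⨆ x : X, ((∑ k, ‖C k x‖ ^ 2 / D k x : ℝ) : EReal))
      =
    (⨆ p : X × (Fin K → ℂ),
        ((∑ k, (2 * ((starRingEnd ℂ) (p.2 k) * C k p.1).re
            - ‖p.2 k‖ ^ 2 * D k p.1) : ℝ) : EReal)) := by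
  apply le_antisymm
  · apply iSup_le
    intro x
    have h := le_iSup (fun p : X × (Fin K → ℂ) =>
        ((∑ k, (2 * ((starRingEnd ℂ) (p.2 k) * C k p.1).re
            - ‖p.2 k‖ ^ 2 * D k p.1) : ℝ) : EReal))
        (x, fun k => C k x * ((D k x)⁻¹ : ℝ))
    refine le_trans (le_of_eq ?_) h
    norm_cast
    exact Finset.sum_congr rfl fun k _ => (quad_eq (C k x) (D k x) (hD k x)).symm
  · apply iSup_le
    intro p
    refine le_trans ?_ (le_iSup _ p.1)
    norm_cast
    exact Finset.sum_le_sum fun k _ => quad_le (C k p.1) (D k p.1) (hD k p.1) (p.2 k)
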